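/- Let G_1, ..., G_t be pairwise non-isomorphic finite simple non-abelian groups, and let G = G_1^{n_1} × ... × G_t^{n_t}. Then G is generated by d elements if and only if each G_m^{n_m} is generated by d elements, for 1 ≤ m ≤ t. -/

import Mathlib

open Function Subgroup

universe u

/-- A surjective image of a `d`-generated group is `d`-generated (helper). -/
private lemma generatedBy_aux {G H : Type*} [Group G] [Group H] (f : G →* H)
    (hf : Function.Surjective f) (d : ℕ)
    (h : ∃ S : Finset G, S.card ≤ d ∧ Subgroup.closure (S : Set G) = ⊤) :
    ∃ S : Finset H, S.card ≤ d ∧ Subgroup.closure (S : Set H) = ⊤ := by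
  obtain ⟨S, hS, hcl⟩ := h
  classical
  refine ⟨S.image f, Finset.card_image_le.trans hS, ?_⟩
  rw [Finset.coe_image, ← MonoidHom.map_closure, hcl]
  exact Subgroup.map_top_of_surjective f hf

/-- Any simple quotient of a finite product is a quotient of one of the factors. -/
private lemma exists_surj_factor {ι : Type*} [Fintype ι] [DecidableEq ι]
    {H : ι → Type*} [∀ i, Group (H i)] {Q : Type*} [Group Q] [IsSimpleGroup Q]
    (q : (∀ i, H i) →* Q) (hq : Function.Surjective q) :
    ∃ i, ∃ f : H i →* Q, Function.Surjective f := by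
  by_cases hall : ∀ i, (q.comp (MonoidHom.mulSingle H i)).range = ⊥
  · exfalso
    have h1 : ∀ x, q x = 1 := by
      intro x
      have hx : x = Finset.univ.noncommProd (fun i => Pi.mulSingle i (x i))
          (show ((Finset.univ : Finset ι) : Set ι).Pairwise (Commute on fun i => Pi.mulSingle i (x i)) from
            fun i _ j _ _ => Pi.mulSingle_apply_commute x i j) :=
        (Finset.noncommProd_mulSingle x).symm
      rw [hx, Finset.univ.map_noncommProd _ _ q]
      refine Finset.noncommProd_eq_pow_card _ _ _ 1 (fun i _ => ?_) |>.trans (one_pow _)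
      have : q (Pi.mulSingle i (x i)) ∈ (q.comp (MonoidHom.mulSingle H i)).range :=
        ⟨x i, rfl⟩
      rw [hall i] at this
      simpa using this
    obtain ⟨a, b, hab⟩ := exists_pair_ne Q
    obtain ⟨x, rfl⟩ := hq a
    obtain ⟨y, rfl⟩ := hq b
    exact hab ((h1 x).trans (h1 y).symm)
  · push_neg at hall
    obtain ⟨i, hi⟩ := hall
    have hnorm : ((q.comp (MonoidHom.mulSingle H i)).range).Normal := by
      constructor
      intro y hy g
      obtain ⟨x, rfl⟩ := hy
      obtain ⟨z, rfl⟩ := hq g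
      refine ⟨z i * x * (z i)⁻¹, ?_⟩
      have hpi : Pi.mulSingle i (z i * x * (z i)⁻¹) = z * Pi.mulSingle i x * z⁻¹ := by
        funext j
        by_cases hji : j = i
        · subst hji; simp
        · simp [Pi.mulSingle_eq_of_ne hji]
      simp only [MonoidHom.comp_apply, MonoidHom.mulSingle_apply]
      rw [hpi, map_mul, map_mul, map_inv]
    rcases hnorm.eq_bot_or_eq_top with h | h
    · exact absurd h hi
    · exact ⟨i, q.comp (MonoidHom.mulSingle H i), MonoidHom.range_eq_top.mp h⟩

/-- A surjection from a simple group onto a nontrivial group is an isomorphism. -/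
private lemma mulEquiv_of_surj {G Q : Type*} [Group G] [Group Q] [IsSimpleGroup G]
    [Nontrivial Q] (f : G →* Q) (hf : Function.Surjective f) : Nonempty (G ≃* Q) := by
  rcases f.normal_ker.eq_bot_or_eq_top with h | h
  · exact ⟨MulEquiv.ofBijective f ⟨(MonoidHom.ker_eq_bot_iff f).mp h, hf⟩⟩
  · exfalso
    obtain ⟨a, b, hab⟩ := exists_pair_ne Q
    obtain ⟨x, rfl⟩ := hf a
    obtain ⟨y, rfl⟩ := hf b
    have hx : x ∈ f.ker := h ▸ Subgroup.mem_top x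
    have hy : y ∈ f.ker := h ▸ Subgroup.mem_top y
    rw [MonoidHom.mem_ker] at hx hy
    exact hab (hx.trans hy.symm)

/-- Goursat-style lemma: a subdirect product in `A × B` with no common simple
quotient between `A` and `B` is everything. -/
private lemma prod_top {A B : Type u} [Group A] [Group B] [Finite A]
    (hcq : ∀ (Q : Type u) [Group Q], ∀ _ : IsSimpleGroup Q,
      (∃ f : A →* Q, Function.Surjective f) →
      (∃ g : B →* Q, Function.Surjective g) → False)
    (H : Subgroup (A × B)) (hA : H.map (MonoidHom.fst A B) = ⊤)
    (hB : H.map (MonoidHom.snd A B) = ⊤) : H = ⊤ := by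
  classical
  have hexB : ∀ b : B, ∃ a, (a, b) ∈ H := by
    intro b
    have : b ∈ H.map (MonoidHom.snd A B) := hB ▸ Subgroup.mem_top b
    obtain ⟨⟨a', b'⟩, hm, he⟩ := this
    exact ⟨a', by simpa [show b' = b from he] using hm⟩
  have hexA : ∀ a : A, ∃ b, (a, b) ∈ H := by
    intro a
    have : a ∈ H.map (MonoidHom.fst A B) := hA ▸ Subgroup.mem_top a
    obtain ⟨⟨a', b'⟩, hm, he⟩ := this
    exact ⟨b', by simpa [show a' = a from he] using hm⟩
  set N : Subgroup A := H.comap (MonoidHom.inl A B) with hNdef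
  have hNmem : ∀ a : A, a ∈ N ↔ (a, (1 : B)) ∈ H := fun a => Iff.rfl
  by_cases htop : N = ⊤
  · rw [eq_top_iff']
    rintro ⟨a, b⟩
    obtain ⟨a', ha'⟩ := hexB b
    have h1 : (a * a'⁻¹, (1 : B)) ∈ H := (hNmem _).mp (htop ▸ Subgroup.mem_top (a * a'⁻¹))
    have : ((a * a'⁻¹) * a', (1 : B) * b) ∈ H := H.mul_mem h1 ha'
    simpa using this
  · exfalso
    have hNnorm : N.Normal := by
      constructor
      intro a ha g
      obtain ⟨b, hb⟩ := hexA g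
      have := H.mul_mem (H.mul_mem hb ((hNmem a).mp ha)) (H.inv_mem hb)
      refine (hNmem _).mpr ?_
      simpa using this
    -- maximal proper normal subgroup containing N
    have hsne : N ∈ {K : Subgroup A | K.Normal ∧ N ≤ K ∧ K ≠ ⊤} := ⟨hNnorm, le_rfl, htop⟩
    obtain ⟨M, ⟨hMnorm, hNM, hMne⟩, hMmax⟩ :=
      Set.Finite.exists_maximalFor id _ (Set.toFinite _) ⟨N, hsne⟩
    haveI := hMnorm
    haveI : Nontrivial (A ⧸ M) := by
      obtain ⟨a, ha⟩ := (Subgroup.eq_top_iff' M).not.mp hMne |> not_forall.mp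
      exact ⟨⟨(a : A ⧸ M), 1, fun h => ha ((QuotientGroup.eq_one_iff a).mp h)⟩⟩
    haveI hsimple : IsSimpleGroup (A ⧸ M) := by
      constructor
      intro N' hN'
      set K : Subgroup A := N'.comap (QuotientGroup.mk' M) with hKdef
      have hMK : M ≤ K := by
        intro m hm
        show QuotientGroup.mk' M m ∈ N'
        have : QuotientGroup.mk' M m = 1 := (QuotientGroup.eq_one_iff m).mpr hm
        rw [this]; exact N'.one_mem
      have hmapK : N' = K.map (QuotientGroup.mk' M) :=
        (Subgroup.map_comap_eq_self_of_surjective (QuotientGroup.mk'_surjective M) N').symm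
      by_cases hKtop : K = ⊤
      · right
        rw [hmapK, hKtop]
        exact Subgroup.map_top_of_surjective _ (QuotientGroup.mk'_surjective M)
      · left
        have hKs : K ∈ {K : Subgroup A | K.Normal ∧ N ≤ K ∧ K ≠ ⊤} :=
          ⟨hN'.comap _, hNM.trans hMK, hKtop⟩
        have : M = K := le_antisymm hMK (hMmax hKs hMK)
        rw [hmapK, ← this]
        exact QuotientGroup.map_mk'_self M
    -- surjection from B
    have key : ∀ a b, (a, b) ∈ H → ∀ a', (a', b) ∈ H →
        (QuotientGroup.mk a : A ⧸ M) = QuotientGroup.mk a' := by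
      intro a b ha a' ha'
      have h1 : (a * a'⁻¹, (1 : B)) ∈ H := by
        have := H.mul_mem ha (H.inv_mem ha')
        simpa using this
      have hmem : a * a'⁻¹ ∈ M := hNM ((hNmem _).mpr h1)
      have : a⁻¹ * a' ∈ M := by
        have h2 := M.inv_mem hmem
        have h3 := hMnorm.conj_mem _ h2 a⁻¹
        simpa [mul_assoc] using h3
      exact QuotientGroup.eq.mpr this
    have key' : ∀ a b, (a, b) ∈ H →
        (QuotientGroup.mk (Classical.choose (hexB b)) : A ⧸ M) = QuotientGroup.mk a :=
      fun a b hab => key _ b (Classical.choose_spec (hexB b)) a hab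
    let φ : B →* A ⧸ M := MonoidHom.mk'
      (fun b => (QuotientGroup.mk (Classical.choose (hexB b)) : A ⧸ M))
      (by
        intro b₁ b₂
        have h1 := Classical.choose_spec (hexB b₁)
        have h2 := Classical.choose_spec (hexB b₂)
        have h12 : (Classical.choose (hexB b₁) * Classical.choose (hexB b₂), b₁ * b₂) ∈ H :=
          H.mul_mem h1 h2
        show (QuotientGroup.mk (Classical.choose (hexB (b₁ * b₂))) : A ⧸ M)
            = QuotientGroup.mk (Classical.choose (hexB b₁))
              * QuotientGroup.mk (Classical.choose (hexB b₂))
        rw [key' _ _ h12]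
        rfl)
    have hφ : Function.Surjective φ := by
      intro x
      obtain ⟨a, rfl⟩ := QuotientGroup.mk'_surjective M x
      obtain ⟨b, hb⟩ := hexA a
      exact ⟨b, key' a b hb⟩
    exact hcq (A ⧸ M) hsimple ⟨QuotientGroup.mk' M, QuotientGroup.mk'_surjective M⟩ ⟨φ, hφ⟩

private def piSuccEquiv {t : ℕ} (P : Fin (t + 1) → Type u) [∀ i, Group (P i)] :
    (∀ i, P i) ≃* P 0 × (∀ i : Fin t, P i.succ) where
  toFun f := (f 0, fun i => f i.succ)
  invFun p := Fin.cons p.1 p.2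
  left_inv f := Fin.cons_self_tail f
  right_inv p := by
    refine Prod.ext ?_ ?_
    · exact Fin.cons_zero p.1 p.2
    · exact funext fun i => Fin.cons_succ p.1 p.2 i
  map_mul' f g := rfl

/-- Key lemma: a subgroup of a finite product surjecting onto each factor,
where the factors have pairwise no common simple quotient, is everything. -/
private lemma pi_top : ∀ (t : ℕ) (P : Fin t → Type u) [∀ i, Group (P i)]
    [∀ i, Finite (P i)],
    (∀ i j, i ≠ j → ∀ (Q : Type u) [Group Q], ∀ _ : IsSimpleGroup Q,
      (∃ f : P i →* Q, Function.Surjective f) →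
      (∃ g : P j →* Q, Function.Surjective g) → False) →
    ∀ H : Subgroup (∀ i, P i), (∀ i, H.map (Pi.evalMonoidHom P i) = ⊤) → H = ⊤ := by
  intro t
  induction t with
  | zero =>
    intro P _ _ _ H _
    rw [eq_top_iff']
    intro x
    have : x = 1 := funext fun i => i.elim0
    rw [this]; exact H.one_mem
  | succ t ih =>
    intro P _ _ hq H hsurj
    classical
    let e := piSuccEquiv P
    let H' := H.map e.toMonoidHom
    have h1 : H'.map (MonoidHom.fst _ _) = ⊤ := by
      show Subgroup.map (MonoidHom.fst _ _) (H.map e.toMonoidHom) = ⊤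
      rw [Subgroup.map_map]
      exact hsurj 0
    have h2 : H'.map (MonoidHom.snd _ _) = ⊤ := by
      refine ih (fun i => P i.succ)
        (fun i j hij Q _ hQ hi hj =>
          hq i.succ j.succ (fun h => hij (Fin.succ_injective t h)) Q hQ hi hj) _ ?_
      intro i
      show Subgroup.map _ (Subgroup.map (MonoidHom.snd _ _) (H.map e.toMonoidHom)) = ⊤
      rw [Subgroup.map_map, Subgroup.map_map]
      exact hsurj i.succ
    have hH' : H' = ⊤ := by
      refine prod_top (fun Q _ hQ hfa hfb => ?_) H' h1 h2
      obtain ⟨g, hg⟩ := hfb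
      obtain ⟨j, g', hg'⟩ := exists_surj_factor g hg
      exact hq 0 j.succ (Fin.succ_ne_zero j).symm Q hQ hfa ⟨g', hg'⟩
    have : H = H'.comap e.toMonoidHom := by
      rw [show H' = H.map e.toMonoidHom from rfl,
        Subgroup.comap_map_eq_self_of_injective e.injective]
    rw [this, hH']
    exact Subgroup.comap_top _

/-- `G` is generated by `d` elements. -/
def GeneratedBy (G : Type*) [Group G] (d : ℕ) : Prop :=
  ∃ S : Finset G, S.card ≤ d ∧ Subgroup.closure (S : Set G) = ⊤

/-- A product of powers of pairwise non-isomorphic non-abelian finite simple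
groups is d-generated iff each power is. -/
theorem product_powers_generated {t : ℕ} (G : Fin t → Type*)
    [∀ i, Group (G i)] [∀ i, Finite (G i)] [∀ i, IsSimpleGroup (G i)]
    (hnonab : ∀ i, ¬ ∀ a b : G i, a * b = b * a)
    (hpair : ∀ i j, i ≠ j → IsEmpty (G i ≃* G j))
    (n : Fin t → ℕ) (d : ℕ) :
    GeneratedBy (∀ i, Fin (n i) → G i) d ↔
      ∀ i, GeneratedBy (Fin (n i) → G i) d := by
  classical
  constructor
  · intro h i
    refine generatedBy_aux (Pi.evalMonoidHom (fun i => Fin (n i) → G i) i) (fun x => ?_) d h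
    exact ⟨Function.update (1 : ∀ i, Fin (n i) → G i) i x, by simp⟩
  · intro h
    choose S hcard hclo using h
    -- generators as functions Fin d → _
    let g : ∀ i, Fin d → (Fin (n i) → G i) := fun i k => ((S i).toList).getD k 1
    have hcover : ∀ i, (S i : Set (Fin (n i) → G i)) ⊆ Set.range (g i) := by
      intro i x hx
      have hx' : x ∈ (S i).toList := Finset.mem_toList.mpr hx
      obtain ⟨m, hm, hget⟩ := List.getElem_of_mem hx'
      have hmd : m < d :=
        lt_of_lt_of_le (by simpa [Finset.length_toList] using hm) (hcard i)
      refine ⟨⟨m, hmd⟩, ?_⟩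
      show ((S i).toList).getD m 1 = x
      rw [List.getD_eq_getElem _ _ hm]
      exact hget
    let T : Finset (∀ i, Fin (n i) → G i) :=
      Finset.image (fun k : Fin d => (fun i => g i k)) Finset.univ
    refine ⟨T, Finset.card_image_le.trans (by simp), ?_⟩
    -- common-quotient hypothesis
    have hq : ∀ i j : Fin t, i ≠ j → ∀ (Q : Type _) [Group Q], ∀ _ : IsSimpleGroup Q,
        (∃ f : (Fin (n i) → G i) →* Q, Function.Surjective f) →
        (∃ g : (Fin (n j) → G j) →* Q, Function.Surjective g) → False := by
      intro i j hij Q _ hQ ⟨f, hf⟩ ⟨f', hf'⟩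
      obtain ⟨_, fi, hfi⟩ := exists_surj_factor (H := fun _ : Fin (n i) => G i) f hf
      obtain ⟨_, fj, hfj⟩ := exists_surj_factor (H := fun _ : Fin (n j) => G j) f' hf'
      obtain ⟨e1⟩ := mulEquiv_of_surj fi hfi
      obtain ⟨e2⟩ := mulEquiv_of_surj fj hfj
      exact (hpair i j hij).false (e1.trans e2.symm)
    refine pi_top t (fun i => Fin (n i) → G i) hq _ (fun i => ?_)
    rw [MonoidHom.map_closure]
    rw [eq_top_iff, ← hclo i]
    refine Subgroup.closure_mono ?_
    intro x hx
    obtain ⟨k, hk⟩ := hcover i hx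
    exact ⟨fun i' => g i' k, by
      simp only [T, Finset.coe_image, Finset.coe_univ, Set.image_univ]
      exact ⟨⟨k, rfl⟩, hk⟩⟩
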